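/- For every continuous π-periodic function f, the infimum of ‖f − g‖_∞ over g ∈ 𝒞 is attained: there exists ḡ ∈ 𝒞 with ‖f − ḡ‖_∞ = inf{‖f − g‖_∞ : g ∈ 𝒞}. -/

import Mathlib

open Real

/-- The family `𝒞` of logarithms of polar radii of origin-centered ellipses. -/
def EllipseLog : Set (ℝ → ℝ) :=
  {g | ∃ a b c : ℝ, 0 < a ∧ b ^ 2 + c ^ 2 < a ^ 2 ∧
    g = fun φ => -(1 / 2) * log (a + b * cos (2 * φ) + c * sin (2 * φ))}

/-- Sup-distance between two (π-periodic continuous) functions. -/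
noncomputable def supDist (f g : ℝ → ℝ) : ℝ := ⨆ φ, |f φ - g φ|

private lemma bc_sq_le (b c x : ℝ) : (b * Real.cos x + c * Real.sin x) ^ 2 ≤ b ^ 2 + c ^ 2 := by
  nlinarith [Real.sin_sq_add_cos_sq x, sq_nonneg (b * Real.sin x - c * Real.cos x)]

private lemma log_sub_le {r x y : ℝ} (hr : 0 < r) (hy : r ≤ y) (hxy : y ≤ x) :
    Real.log x - Real.log y ≤ (x - y) / r := by
  have hy0 : 0 < y := lt_of_lt_of_le hr hy
  have hx0 : 0 < x := lt_of_lt_of_le hy0 hxy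
  have h1 : Real.log (x / y) ≤ x / y - 1 := Real.log_le_sub_one_of_pos (by positivity)
  rw [Real.log_div (ne_of_gt hx0) (ne_of_gt hy0)] at h1
  have h2 : x / y - 1 = (x - y) / y := by field_simp
  have h3 : (x - y) / y ≤ (x - y) / r :=
    div_le_div_of_nonneg_left (by linarith) hr hy
  linarith

private lemma log_lip {r x y : ℝ} (hr : 0 < r) (hx : r ≤ x) (hy : r ≤ y) :
    |Real.log x - Real.log y| ≤ |x - y| / r := by
  rcases le_total y x with h | h
  · rw [abs_of_nonneg (sub_nonneg.2 (Real.log_le_log (lt_of_lt_of_le hr hy) h)),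
      abs_of_nonneg (sub_nonneg.2 h)]
    exact log_sub_le hr hy h
  · rw [abs_sub_comm, abs_sub_comm x y,
      abs_of_nonneg (sub_nonneg.2 (Real.log_le_log (lt_of_lt_of_le hr hx) h)),
      abs_of_nonneg (sub_nonneg.2 h)]
    exact log_sub_le hr hx h

set_option maxHeartbeats 4000000 in
/-- The best uniform approximation from `𝒞` to a continuous π-periodic function is
attained. -/
theorem best_approx_exists (f : ℝ → ℝ) (hf : Continuous f)
    (hper : Function.Periodic f π) :
    ∃ gbar ∈ EllipseLog,
      supDist f gbar = sInf {d : ℝ | ∃ g ∈ EllipseLog, d = supDist f g} := by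

  classical
  -- basic abbreviations
  set e : ℝ × ℝ × ℝ → ℝ → ℝ :=
    fun p φ => p.1 + p.2.1 * Real.cos (2 * φ) + p.2.2 * Real.sin (2 * φ) with he
  set G : ℝ × ℝ × ℝ → ℝ → ℝ := fun p φ => -(1 / 2) * Real.log (e p φ) with hG
  set F : ℝ × ℝ × ℝ → ℝ := fun p => supDist f (G p) with hF
  set D : Set ℝ := {d : ℝ | ∃ g ∈ EllipseLog, d = supDist f g} with hD
  -- generic sup lemmas
  have hsup_le : ∀ (g : ℝ → ℝ) (C : ℝ), (∀ φ, |f φ - g φ| ≤ C) → supDist f g ≤ C := by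
    intro g C h
    exact ciSup_le h
  have hle_sup : ∀ (g : ℝ → ℝ) (C : ℝ), (∀ φ, |f φ - g φ| ≤ C) →
      ∀ φ, |f φ - g φ| ≤ supDist f g := by
    intro g C h φ
    exact le_ciSup ⟨C, by rintro x ⟨ψ, rfl⟩; exact h ψ⟩ φ
  have hsup_nonneg : ∀ g : ℝ → ℝ, 0 ≤ supDist f g := by
    intro g; exact Real.iSup_nonneg fun φ => abs_nonneg _
  -- f is bounded
  obtain ⟨Cf, hCf⟩ : ∃ C, ∀ x, |f x| ≤ C := by
    obtain ⟨C, hC⟩ :=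
      (isCompact_Icc (a := (0:ℝ)) (b := π)).exists_bound_of_continuousOn hf.continuousOn
    refine ⟨C, fun x => ?_⟩
    obtain ⟨y, hy, hxy⟩ := hper.exists_mem_Ico₀ Real.pi_pos x
    rw [hxy]
    exact hC y ⟨hy.1, hy.2.le⟩
  -- pointwise positivity on the parameter domain
  have hepos : ∀ a b c : ℝ, 0 < a → b ^ 2 + c ^ 2 < a ^ 2 → ∀ φ, 0 < e (a, b, c) φ := by
    intro a b c ha habc φ
    have h1 := bc_sq_le b c (2 * φ)
    simp only [he]
    nlinarith [sq_nonneg (b * Real.cos (2 * φ) + c * Real.sin (2 * φ) + a)]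
  -- each G (a,b,c) is bounded on the parameter domain
  have hGbdd : ∀ a b c : ℝ, 0 < a → b ^ 2 + c ^ 2 < a ^ 2 → ∃ C, ∀ φ, |G (a, b, c) φ| ≤ C := by
    intro a b c ha habc
    set s := Real.sqrt (b ^ 2 + c ^ 2) with hs
    have hs0 : 0 ≤ s := Real.sqrt_nonneg _
    have hs2 : s ^ 2 = b ^ 2 + c ^ 2 := Real.sq_sqrt (by positivity)
    have hsa : s < a := by nlinarith
    refine ⟨(1 / 2) * (|Real.log (a - s)| + |Real.log (a + s)|), fun φ => ?_⟩
    have ht : |b * Real.cos (2 * φ) + c * Real.sin (2 * φ)| ≤ s := by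
      rw [← Real.sqrt_sq_eq_abs, hs]
      exact Real.sqrt_le_sqrt (bc_sq_le b c (2 * φ))
    have ht' := abs_le.mp ht
    have hlo : a - s ≤ e (a, b, c) φ := by simp only [he]; linarith
    have hhi : e (a, b, c) φ ≤ a + s := by simp only [he]; linarith
    have hlog1 : Real.log (a - s) ≤ Real.log (e (a, b, c) φ) :=
      Real.log_le_log (by linarith) hlo
    have hlog2 : Real.log (e (a, b, c) φ) ≤ Real.log (a + s) :=
      Real.log_le_log (by linarith) hhi
    have : |Real.log (e (a, b, c) φ)| ≤ |Real.log (a - s)| + |Real.log (a + s)| := by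
      rw [abs_le]
      constructor
      · have := neg_abs_le (Real.log (a - s)); have := abs_nonneg (Real.log (a + s)); linarith
      · have := le_abs_self (Real.log (a + s)); have := abs_nonneg (Real.log (a - s)); linarith
    have habsG : |G (a, b, c) φ| = (1 / 2) * |Real.log (e (a, b, c) φ)| := by
      simp only [hG, abs_mul, abs_neg]
      norm_num
    rw [habsG]
    linarith
  -- the reference value M
  set M : ℝ := F (1, 0, 0) with hM
  have hG0 : ∀ φ, G (1, 0, 0) φ = 0 := by
    intro φ; simp [hG, he]
  have hfM : ∀ φ, |f φ| ≤ M := by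
    intro φ
    have := hle_sup (G (1, 0, 0)) Cf (fun ψ => by rw [hG0 ψ, sub_zero]; exact hCf ψ) φ
    rw [hG0 φ, sub_zero] at this
    exact this
  have hM0 : 0 ≤ M := hsup_nonneg _
  -- the compact parameter region
  set r : ℝ := Real.exp (-(4 * M + 2)) with hr
  set R : ℝ := Real.exp (4 * M + 2) with hR
  have hrpos : 0 < r := Real.exp_pos _
  have hRpos : 0 < R := Real.exp_pos _
  set K : Set (ℝ × ℝ × ℝ) := {p | ∀ φ, e p φ ∈ Set.Icc r R} with hK
  have h1K : ((1 : ℝ), (0 : ℝ), (0 : ℝ)) ∈ K := by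
    intro φ
    have h1 : e ((1 : ℝ), (0 : ℝ), (0 : ℝ)) φ = 1 := by simp [he]
    rw [h1]
    constructor
    · rw [hr]
      calc Real.exp (-(4 * M + 2)) ≤ Real.exp 0 := Real.exp_le_exp.mpr (by linarith)
        _ = 1 := Real.exp_zero
    · rw [hR]
      calc (1 : ℝ) = Real.exp 0 := Real.exp_zero.symm
        _ ≤ Real.exp (4 * M + 2) := Real.exp_le_exp.mpr (by linarith)
  -- membership in K implies parameter-domain membership
  have hKdom : ∀ p ∈ K, 0 < p.1 ∧ p.2.1 ^ 2 + p.2.2 ^ 2 < p.1 ^ 2 := by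
    intro p hp
    obtain ⟨a, b, c⟩ := p
    have h0 := hp 0
    have h2 := hp (π / 2)
    have e0 : e (a, b, c) 0 = a + b := by simp [he]
    have e2 : e (a, b, c) (π / 2) = a - b := by
      have : 2 * (π / 2) = π := by ring
      simp [he, this, Real.cos_pi, Real.sin_pi]; ring
    rw [e0] at h0; rw [e2] at h2
    have ha : r ≤ a := by
      have := h0.1; have := h2.1; have := h0.2; have := h2.2; linarith
    have hapos : 0 < a := lt_of_lt_of_le hrpos ha
    refine ⟨hapos, ?_⟩
    by_cases hbc : b ^ 2 + c ^ 2 = 0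
    · rw [hbc]; positivity
    · set s := Real.sqrt (b ^ 2 + c ^ 2) with hs
      have hbc' : 0 < b ^ 2 + c ^ 2 := lt_of_le_of_ne (by positivity) (Ne.symm hbc)
      have hspos : 0 < s := Real.sqrt_pos.mpr hbc'
      have hs2 : s ^ 2 = b ^ 2 + c ^ 2 := Real.sq_sqrt (by positivity)
      -- find an angle where b cos + c sin = -s
      set z : ℂ := ⟨-b, -c⟩ with hz
      have hz0 : z ≠ 0 := by
        intro h
        rw [Complex.ext_iff] at h
        simp [hz] at h
        rw [h.1, h.2] at hbc'
        norm_num at hbc'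
      have habs : ‖z‖ = s := by
        rw [Complex.norm_def, Complex.normSq_apply, hs]
        norm_num [hz]
        ring_nf
      have hcos : Real.cos (Complex.arg z) = -b / s := by
        rw [Complex.cos_arg hz0, habs]
      have hsin : Real.sin (Complex.arg z) = -c / s := by
        rw [Complex.sin_arg, habs]
      have hval := hp (Complex.arg z / 2)
      have harg : 2 * (Complex.arg z / 2) = Complex.arg z := by ring
      have heval : e (a, b, c) (Complex.arg z / 2) = a - s := by
        simp only [he, harg, hcos, hsin]
        field_simp
        nlinarith [hs2]
      rw [heval] at hval
      have : s ≤ a - r := by linarith [hval.1]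
      nlinarith
  -- uniform bounds for p ∈ K
  have hGK : ∀ p ∈ K, ∀ φ, |G p φ| ≤ 2 * M + 1 := by
    intro p hp φ
    have h1 := hp φ
    have hlog1 : -(4 * M + 2) ≤ Real.log (e p φ) := by
      have := Real.log_le_log hrpos h1.1
      rwa [hr, Real.log_exp] at this
    have hlog2 : Real.log (e p φ) ≤ 4 * M + 2 := by
      have := Real.log_le_log (lt_of_lt_of_le hrpos h1.1) h1.2
      rwa [hR, Real.log_exp] at this
    have habsG : |G p φ| = (1 / 2) * |Real.log (e p φ)| := by
      simp only [hG, abs_mul, abs_neg]; norm_num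
    rw [habsG]
    have hll : |Real.log (e p φ)| ≤ 4 * M + 2 := abs_le.mpr ⟨hlog1, hlog2⟩
    linarith
  have hfGK : ∀ p ∈ K, ∀ φ, |f φ - G p φ| ≤ 3 * M + 1 := by
    intro p hp φ
    calc |f φ - G p φ| ≤ |f φ| + |G p φ| := abs_sub _ _
      _ ≤ M + (2 * M + 1) := add_le_add (hfM φ) (hGK p hp φ)
      _ = 3 * M + 1 := by ring
  have hleFK : ∀ p ∈ K, ∀ φ, |f φ - G p φ| ≤ F p := by
    intro p hp φ
    exact hle_sup (G p) (3 * M + 1) (hfGK p hp) φ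
  -- Lipschitz estimate for F on K
  have hGdiff : ∀ p ∈ K, ∀ q ∈ K, ∀ φ, |G p φ - G q φ| ≤ 3 / (2 * r) * dist p q := by
    intro p hp q hq φ
    have h1 := (hp φ).1
    have h2 := (hq φ).1
    have hlog := log_lip hrpos h1 h2
    have hda : |p.1 - q.1| ≤ dist p q := by
      rw [Prod.dist_eq, ← Real.dist_eq]
      exact le_max_left _ _
    have hdb : |p.2.1 - q.2.1| ≤ dist p q := by
      rw [Prod.dist_eq, ← Real.dist_eq]
      exact le_trans (le_trans (by rw [Prod.dist_eq]; exact le_max_left _ _) le_rfl)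
        (le_max_right _ _)
    have hdc : |p.2.2 - q.2.2| ≤ dist p q := by
      rw [Prod.dist_eq, ← Real.dist_eq]
      exact le_trans (le_trans (by rw [Prod.dist_eq]; exact le_max_right _ _) le_rfl)
        (le_max_right _ _)
    have hediff : |e p φ - e q φ| ≤ 3 * dist p q := by
      have hc1 : |Real.cos (2 * φ)| ≤ 1 := Real.abs_cos_le_one _
      have hs1 : |Real.sin (2 * φ)| ≤ 1 := Real.abs_sin_le_one _
      have : e p φ - e q φ = (p.1 - q.1) + (p.2.1 - q.2.1) * Real.cos (2 * φ)
          + (p.2.2 - q.2.2) * Real.sin (2 * φ) := by simp only [he]; ring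
      rw [this]
      calc |(p.1 - q.1) + (p.2.1 - q.2.1) * Real.cos (2 * φ)
          + (p.2.2 - q.2.2) * Real.sin (2 * φ)|
          ≤ |(p.1 - q.1) + (p.2.1 - q.2.1) * Real.cos (2 * φ)|
            + |(p.2.2 - q.2.2) * Real.sin (2 * φ)| := abs_add_le _ _
        _ ≤ (|p.1 - q.1| + |(p.2.1 - q.2.1) * Real.cos (2 * φ)|)
            + |(p.2.2 - q.2.2) * Real.sin (2 * φ)| := by
            exact add_le_add (abs_add_le _ _) le_rfl
        _ ≤ (dist p q + dist p q * 1) + dist p q * 1 := by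
            refine add_le_add (add_le_add hda ?_) ?_
            · rw [abs_mul]
              exact mul_le_mul hdb hc1 (abs_nonneg _) dist_nonneg
            · rw [abs_mul]
              exact mul_le_mul hdc hs1 (abs_nonneg _) dist_nonneg
        _ = 3 * dist p q := by ring
    have : |G p φ - G q φ| = (1 / 2) * |Real.log (e p φ) - Real.log (e q φ)| := by
      have h4 : G p φ - G q φ = (1 / 2) * (Real.log (e q φ) - Real.log (e p φ)) := by
        simp only [hG]; ring
      rw [h4, abs_mul, abs_sub_comm, abs_of_pos (by norm_num : (0:ℝ) < 1 / 2)]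
    rw [this]
    have h3 : |Real.log (e p φ) - Real.log (e q φ)| ≤ 3 * dist p q / r := by
      refine le_trans hlog ?_
      gcongr
    calc (1 / 2) * |Real.log (e p φ) - Real.log (e q φ)| ≤ (1 / 2) * (3 * dist p q / r) := by
          linarith
      _ = 3 / (2 * r) * dist p q := by field_simp
  have hFdiff : ∀ p ∈ K, ∀ q ∈ K, dist (F p) (F q) ≤ 3 / (2 * r) * dist p q := by
    intro p hp q hq
    rw [Real.dist_eq, abs_sub_le_iff]
    constructor
    · have : F p ≤ F q + 3 / (2 * r) * dist p q := by
        refine ciSup_le fun φ => ?_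
        calc |f φ - G p φ| ≤ |f φ - G q φ| + |G q φ - G p φ| := abs_sub_le _ _ _
          _ ≤ F q + 3 / (2 * r) * dist p q := by
              refine add_le_add (hleFK q hq φ) ?_
              rw [abs_sub_comm]
              exact hGdiff p hp q hq φ
      linarith
    · have : F q ≤ F p + 3 / (2 * r) * dist p q := by
        refine ciSup_le fun φ => ?_
        calc |f φ - G q φ| ≤ |f φ - G p φ| + |G p φ - G q φ| := abs_sub_le _ _ _
          _ ≤ F p + 3 / (2 * r) * dist p q := by
              exact add_le_add (hleFK p hp φ) (hGdiff p hp q hq φ)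
      linarith
  have hFcont : ContinuousOn F K := by
    have hlip : LipschitzOnWith (Real.toNNReal (3 / (2 * r))) F K := by
      apply LipschitzOnWith.of_dist_le_mul
      intro x hx y hy
      rw [Real.coe_toNNReal _ (by positivity)]
      exact hFdiff x hx y hy
    exact hlip.continuousOn
  -- K is compact
  have hKclosed : IsClosed K := by
    have : K = ⋂ φ : ℝ, (fun p : ℝ × ℝ × ℝ => e p φ) ⁻¹' Set.Icc r R := by
      ext p; simp [hK, Set.mem_iInter]
    rw [this]
    refine isClosed_iInter fun φ => IsClosed.preimage ?_ isClosed_Icc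
    exact (continuous_fst.add ((continuous_fst.comp continuous_snd).mul continuous_const)).add
      ((continuous_snd.comp continuous_snd).mul continuous_const)
  have hKsub : K ⊆ Set.Icc ((-R, -R, -R) : ℝ × ℝ × ℝ) ((R, R, R) : ℝ × ℝ × ℝ) := by
    intro p hp
    obtain ⟨a, b, c⟩ := p
    have h0 := hp 0
    have h2 := hp (π / 2)
    have h4 := hp (π / 4)
    have h4' := hp (-(π / 4))
    have e0 : e (a, b, c) 0 = a + b := by simp [he]
    have e2 : e (a, b, c) (π / 2) = a - b := by
      have : 2 * (π / 2) = π := by ring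
      simp [he, this, Real.cos_pi, Real.sin_pi]; ring
    have e4 : e (a, b, c) (π / 4) = a + c := by
      have : 2 * (π / 4) = π / 2 := by ring
      simp [he, this, Real.cos_pi_div_two, Real.sin_pi_div_two]
    have e4' : e (a, b, c) (-(π / 4)) = a - c := by
      have : 2 * (-(π / 4)) = -(π / 2) := by ring
      simp [he, this, Real.cos_pi_div_two, Real.sin_pi_div_two]
      ring
    rw [e0] at h0; rw [e2] at h2; rw [e4] at h4; rw [e4'] at h4'
    obtain ⟨⟨l0, u0⟩, ⟨l2, u2⟩, ⟨l4, u4⟩, ⟨l4', u4'⟩⟩ := And.intro h0 (And.intro h2 (And.intro h4 h4'))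
    constructor
    · refine ⟨by dsimp; linarith, by dsimp; linarith, by dsimp; linarith⟩
    · refine ⟨by dsimp; linarith, by dsimp; linarith, by dsimp; linarith⟩
  have hKcomp : IsCompact K := IsCompact.of_isClosed_subset isCompact_Icc hKclosed hKsub
  -- extract the minimizer
  obtain ⟨pbar, hpbarK, hmin⟩ := hKcomp.exists_isMinOn ⟨_, h1K⟩ hFcont
  obtain ⟨hpa, hpbc⟩ := hKdom pbar hpbarK
  have hmem : G pbar ∈ EllipseLog := by
    refine ⟨pbar.1, pbar.2.1, pbar.2.2, hpa, hpbc, ?_⟩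
    funext φ
    simp only [hG, he]
  refine ⟨G pbar, hmem, le_antisymm ?_ ?_⟩
  · -- F pbar ≤ sInf D
    refine le_csInf ⟨F pbar, G pbar, hmem, rfl⟩ ?_
    rintro d ⟨g, ⟨a, b, c, ha, habc, rfl⟩, rfl⟩
    have hgG : (fun φ => -(1 / 2) * Real.log (a + b * Real.cos (2 * φ) + c * Real.sin (2 * φ)))
        = G (a, b, c) := by funext φ; simp only [hG, he]
    rw [hgG]
    by_contra hcon
    push_neg at hcon
    -- then supDist f (G (a,b,c)) < F pbar ≤ M, so (a,b,c) ∈ K, contradiction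
    have hlt : F (a, b, c) < F pbar := hcon
    have hFpbarM : F pbar ≤ M := hmin h1K
    have hdM : F (a, b, c) < M := lt_of_lt_of_le hlt hFpbarM
    obtain ⟨C, hC⟩ := hGbdd a b c ha habc
    have hbd : ∀ φ, |f φ - G (a, b, c) φ| ≤ M + C := by
      intro φ
      calc |f φ - G (a, b, c) φ| ≤ |f φ| + |G (a, b, c) φ| := abs_sub _ _
        _ ≤ M + C := add_le_add (hfM φ) (hC φ)
    have hptle : ∀ φ, |f φ - G (a, b, c) φ| ≤ F (a, b, c) := hle_sup _ _ hbd
    have hGsmall : ∀ φ, |G (a, b, c) φ| ≤ 2 * M := by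
      intro φ
      have h1 := hptle φ
      have h2 := hfM φ
      have : |G (a, b, c) φ| ≤ |f φ| + |f φ - G (a, b, c) φ| := by
        have := abs_sub_abs_le_abs_sub (f φ) (G (a, b, c) φ)
        have h3 := abs_sub (f φ) (G (a, b, c) φ)
        have h4 : G (a, b, c) φ = f φ - (f φ - G (a, b, c) φ) := by ring
        calc |G (a, b, c) φ| = |f φ - (f φ - G (a, b, c) φ)| := by rw [← h4]
          _ ≤ |f φ| + |f φ - G (a, b, c) φ| := abs_sub _ _
      linarith
    have hmemK : ((a, b, c) : ℝ × ℝ × ℝ) ∈ K := by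
      intro φ
      have hpos := hepos a b c ha habc φ
      have hexp : e (a, b, c) φ = Real.exp (-2 * G (a, b, c) φ) := by
        have : -2 * G (a, b, c) φ = Real.log (e (a, b, c) φ) := by
          simp only [hG]; ring
        rw [this, Real.exp_log hpos]
      have hGa := abs_le.mp (hGsmall φ)
      rw [hexp]
      constructor
      · rw [hr]; exact Real.exp_le_exp.mpr (by linarith)
      · rw [hR]; exact Real.exp_le_exp.mpr (by linarith)
    exact absurd (hmin hmemK) (not_le.mpr hlt)
  · -- sInf D ≤ F pbar
    refine csInf_le ⟨0, ?_⟩ ⟨G pbar, hmem, rfl⟩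
    rintro d ⟨g, _, rfl⟩
    exact hsup_nonneg g
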